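/- arXiv:1804.10227 — 8 statements merged into one kernel-verified Lean document; each statement's English description precedes it below -/
import Mathlib

section
/- Persistence: For any HT-trace ⟨H,T⟩ of length λ (finite or infinite), any temporal formula φ, and any time point k with 0 ≤ k ≤ λ, k ≠ ω, if ⟨H,T⟩, k ⊨ φ then ⟨T,T⟩, k ⊨ φ. -/
open scoped Classical

/-- Temporal formulas over atoms `α`, with past and future operators. -/
inductive TForm (α : Type) : Type
  | atom : α → TForm α
  | bot  : TForm α
  | top  : TForm α
  | and  : TForm α → TForm α → TForm α
  | or   : TForm α → TForm α → TForm α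
  | imp  : TForm α → TForm α → TForm α
  | prev : TForm α → TForm α            -- ● previous
  | wprev : TForm α → TForm α           -- weak previous
  | since : TForm α → TForm α → TForm α -- S
  | trigger : TForm α → TForm α → TForm α -- T
  | next : TForm α → TForm α            -- ○ next
  | wnext : TForm α → TForm α           -- weak next
  | untl : TForm α → TForm α → TForm α  -- U
  | rels : TForm α → TForm α → TForm α  -- R

variable {α : Type}

/-- THT satisfaction: `sat lam φ H T k` means ⟨H,T⟩,k ⊨ φ on an HT-trace of length `lam`. -/
def sat (lam : ℕ∞) : TForm α → (ℕ → Set α) → (ℕ → Set α) → ℕ → Prop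
  | .atom a, H, _, k => a ∈ H k
  | .bot, _, _, _ => False
  | .top, _, _, _ => True
  | .and φ ψ, H, T, k => sat lam φ H T k ∧ sat lam ψ H T k
  | .or φ ψ, H, T, k => sat lam φ H T k ∨ sat lam ψ H T k
  | .imp φ ψ, H, T, k =>
      (sat lam φ H T k → sat lam ψ H T k) ∧ (sat lam φ T T k → sat lam ψ T T k)
  | .prev φ, H, T, k => 0 < k ∧ sat lam φ H T (k - 1)
  | .wprev φ, H, T, k => k = 0 ∨ sat lam φ H T (k - 1)
  | .since φ ψ, H, T, k =>
      ∃ j, j ≤ k ∧ sat lam ψ H T j ∧ ∀ i, j < i → i ≤ k → sat lam φ H T i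
  | .trigger φ ψ, H, T, k =>
      ∀ j, j ≤ k → sat lam ψ H T j ∨ ∃ i, j < i ∧ i ≤ k ∧ sat lam φ H T i
  | .next φ, H, T, k => ((k : ℕ∞) + 1 ≤ lam) ∧ sat lam φ H T (k + 1)
  | .wnext φ, H, T, k => ¬ ((k : ℕ∞) + 1 ≤ lam) ∨ sat lam φ H T (k + 1)
  | .untl φ ψ, H, T, k =>
      ∃ j, k ≤ j ∧ (j : ℕ∞) ≤ lam ∧ sat lam ψ H T j ∧ ∀ i, k ≤ i → i < j → sat lam φ H T i
  | .rels φ ψ, H, T, k =>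
      ∀ j, k ≤ j → (j : ℕ∞) ≤ lam → sat lam ψ H T j ∨ ∃ i, k ≤ i ∧ i < j ∧ sat lam φ H T i

/-- Classical LTL satisfaction on a (possibly finite) trace `T` of length `lam`. -/
def satL (lam : ℕ∞) : TForm α → (ℕ → Set α) → ℕ → Prop
  | .atom a, T, k => a ∈ T k
  | .bot, _, _ => False
  | .top, _, _ => True
  | .and φ ψ, T, k => satL lam φ T k ∧ satL lam ψ T k
  | .or φ ψ, T, k => satL lam φ T k ∨ satL lam ψ T k
  | .imp φ ψ, T, k => satL lam φ T k → satL lam ψ T k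
  | .prev φ, T, k => 0 < k ∧ satL lam φ T (k - 1)
  | .wprev φ, T, k => k = 0 ∨ satL lam φ T (k - 1)
  | .since φ ψ, T, k =>
      ∃ j, j ≤ k ∧ satL lam ψ T j ∧ ∀ i, j < i → i ≤ k → satL lam φ T i
  | .trigger φ ψ, T, k =>
      ∀ j, j ≤ k → satL lam ψ T j ∨ ∃ i, j < i ∧ i ≤ k ∧ satL lam φ T i
  | .next φ, T, k => ((k : ℕ∞) + 1 ≤ lam) ∧ satL lam φ T (k + 1)
  | .wnext φ, T, k => ¬ ((k : ℕ∞) + 1 ≤ lam) ∨ satL lam φ T (k + 1)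
  | .untl φ ψ, T, k =>
      ∃ j, k ≤ j ∧ (j : ℕ∞) ≤ lam ∧ satL lam ψ T j ∧ ∀ i, k ≤ i → i < j → satL lam φ T i
  | .rels φ ψ, T, k =>
      ∀ j, k ≤ j → (j : ℕ∞) ≤ lam → satL lam ψ T j ∨ ∃ i, k ≤ i ∧ i < j ∧ satL lam φ T i

/-- ¬φ := φ → ⊥ -/
def TForm.neg (φ : TForm α) : TForm α := .imp φ .bot
/-- F (final) := ¬○⊤ -/
def TForm.F : TForm α := TForm.neg (.next .top)
/-- I (initial) := ¬●⊤ -/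
def TForm.I : TForm α := TForm.neg (.prev .top)
/-- □φ := ⊥ R φ (always afterward) -/
def TForm.always (φ : TForm α) : TForm α := .rels .bot φ
/-- ◇φ := ⊤ U φ (eventually afterward) -/
def TForm.ev (φ : TForm α) : TForm α := .untl .top φ
/-- ■φ := ⊥ T φ (always before) -/
def TForm.alwaysB (φ : TForm α) : TForm α := .trigger .bot φ
/-- ♦φ := ⊤ S φ (eventually before) -/
def TForm.evB (φ : TForm α) : TForm α := .since .top φ

/-- ⟨H,T⟩ is an HT-trace: H_i ⊆ T_i for all i. -/
def isHT (H T : ℕ → Set α) : Prop := ∀ i, H i ⊆ T i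

/-- Implication-free formulas. -/
def ImpFree : TForm α → Prop
  | .imp _ _ => False
  | .and φ ψ => ImpFree φ ∧ ImpFree ψ
  | .or φ ψ => ImpFree φ ∧ ImpFree ψ
  | .since φ ψ => ImpFree φ ∧ ImpFree ψ
  | .trigger φ ψ => ImpFree φ ∧ ImpFree ψ
  | .untl φ ψ => ImpFree φ ∧ ImpFree ψ
  | .rels φ ψ => ImpFree φ ∧ ImpFree ψ
  | .prev φ => ImpFree φ
  | .wprev φ => ImpFree φ
  | .next φ => ImpFree φ
  | .wnext φ => ImpFree φ
  | _ => True

/-- Boolean dual: swaps ∧/∨, ⊤/⊥, U/R, S/T, ○/ŏ, ●/weak-previous. -/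
def dual : TForm α → TForm α
  | .atom a => .atom a
  | .bot => .top
  | .top => .bot
  | .and φ ψ => .or (dual φ) (dual ψ)
  | .or φ ψ => .and (dual φ) (dual ψ)
  | .imp φ ψ => .imp (dual φ) (dual ψ)
  | .prev φ => .wprev (dual φ)
  | .wprev φ => .prev (dual φ)
  | .since φ ψ => .trigger (dual φ) (dual ψ)
  | .trigger φ ψ => .since (dual φ) (dual ψ)
  | .next φ => .wnext (dual φ)
  | .wnext φ => .next (dual φ)
  | .untl φ ψ => .rels (dual φ) (dual ψ)
  | .rels φ ψ => .untl (dual φ) (dual ψ)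

/-- Time-reversal σ: swaps each temporal connective with its past/future mirror. -/
def tswap : TForm α → TForm α
  | .atom a => .atom a
  | .bot => .bot
  | .top => .top
  | .and φ ψ => .and (tswap φ) (tswap ψ)
  | .or φ ψ => .or (tswap φ) (tswap ψ)
  | .imp φ ψ => .imp (tswap φ) (tswap ψ)
  | .prev φ => .next (tswap φ)
  | .next φ => .prev (tswap φ)
  | .wprev φ => .wnext (tswap φ)
  | .wnext φ => .wprev (tswap φ)
  | .since φ ψ => .untl (tswap φ) (tswap ψ)
  | .untl φ ψ => .since (tswap φ) (tswap ψ)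
  | .trigger φ ψ => .rels (tswap φ) (tswap ψ)
  | .rels φ ψ => .trigger (tswap φ) (tswap ψ)

theorem persistence_aux {α : Type} (lam : ℕ∞) (H T : ℕ → Set α) (hHT : isHT H T)
    (φ : TForm α) : ∀ k, sat lam φ H T k → sat lam φ T T k := by
  induction φ with
  | atom a => exact fun k h => hHT k h
  | bot => exact fun k h => h
  | top => exact fun _ _ => trivial
  | and φ ψ ihφ ihψ => exact fun k h => ⟨ihφ k h.1, ihψ k h.2⟩
  | or φ ψ ihφ ihψ => exact fun k h => h.elim (fun h => Or.inl (ihφ k h)) (fun h => Or.inr (ihψ k h))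
  | imp φ ψ ihφ ihψ => exact fun k h => ⟨h.2, h.2⟩
  | prev φ ih => exact fun k h => ⟨h.1, ih _ h.2⟩
  | wprev φ ih => exact fun k h => h.elim Or.inl (fun h => Or.inr (ih _ h))
  | since φ ψ ihφ ihψ =>
      rintro k ⟨j, hj, hψ, hφ⟩
      exact ⟨j, hj, ihψ j hψ, fun i h1 h2 => ihφ i (hφ i h1 h2)⟩
  | trigger φ ψ ihφ ihψ =>
      intro k h j hj
      rcases h j hj with hψ | ⟨i, h1, h2, hφ⟩
      · exact Or.inl (ihψ j hψ)
      · exact Or.inr ⟨i, h1, h2, ihφ i hφ⟩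
  | next φ ih => exact fun k h => ⟨h.1, ih _ h.2⟩
  | wnext φ ih => exact fun k h => h.elim Or.inl (fun h => Or.inr (ih _ h))
  | untl φ ψ ihφ ihψ =>
      rintro k ⟨j, hj, hjl, hψ, hφ⟩
      exact ⟨j, hj, hjl, ihψ j hψ, fun i h1 h2 => ihφ i (hφ i h1 h2)⟩
  | rels φ ψ ihφ ihψ =>
      intro k h j hj hjl
      rcases h j hj hjl with hψ | ⟨i, h1, h2, hφ⟩
      · exact Or.inl (ihψ j hψ)
      · exact Or.inr ⟨i, h1, h2, ihφ i hφ⟩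

/-- Persistence: if ⟨H,T⟩,k ⊨ φ then ⟨T,T⟩,k ⊨ φ. -/
theorem persistence {α : Type} (lam : ℕ∞) (H T : ℕ → Set α) (hHT : isHT H T)
    (φ : TForm α) (k : ℕ) (hk : (k : ℕ∞) ≤ lam)
    (h : sat lam φ H T k) : sat lam φ T T k := by
  exact persistence_aux lam H T hHT φ k h
end

section
/- For implication-free formulas, THT and LTL equivalence coincide: if φ and ψ are temporal formulas containing no implication (hence no negation), then φ and ψ are equivalent in LTL (over possibly infinite traces) iff φ and ψ are equivalent in THT. -/
open scoped Classical

variable {α : Type}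

lemma sat_eq_satL {α : Type} (lam : ℕ∞) :
    ∀ (φ : TForm α), ImpFree φ → ∀ (H T : ℕ → Set α) (k : ℕ),
      sat lam φ H T k ↔ satL lam φ H k := by
  intro φ
  induction φ with
  | atom a => intro _ H T k; rfl
  | bot => intro _ H T k; rfl
  | top => intro _ H T k; rfl
  | and φ ψ ih1 ih2 =>
      intro h H T k
      simp [sat, satL, ih1 h.1 H T, ih2 h.2 H T]
  | or φ ψ ih1 ih2 =>
      intro h H T k
      simp [sat, satL, ih1 h.1 H T, ih2 h.2 H T]
  | imp φ ψ _ _ => intro h; exact absurd h not_false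
  | prev φ ih => intro h H T k; simp [sat, satL, ih h H T]
  | wprev φ ih => intro h H T k; simp [sat, satL, ih h H T]
  | next φ ih => intro h H T k; simp [sat, satL, ih h H T]
  | wnext φ ih => intro h H T k; simp [sat, satL, ih h H T]
  | since φ ψ ih1 ih2 =>
      intro h H T k
      simp [sat, satL, ih1 h.1 H T, ih2 h.2 H T]
  | trigger φ ψ ih1 ih2 =>
      intro h H T k
      simp [sat, satL, ih1 h.1 H T, ih2 h.2 H T]
  | untl φ ψ ih1 ih2 =>
      intro h H T k
      simp [sat, satL, ih1 h.1 H T, ih2 h.2 H T]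
  | rels φ ψ ih1 ih2 =>
      intro h H T k
      simp [sat, satL, ih1 h.1 H T, ih2 h.2 H T]

/-- for implication-free formulas, LTL equivalence and THT equivalence coincide. -/
theorem impfree_equiv {α : Type} (φ ψ : TForm α) (hφ : ImpFree φ) (hψ : ImpFree ψ) :
    (∀ (lam : ℕ∞) (T : ℕ → Set α) (k : ℕ), (k : ℕ∞) ≤ lam →
        (satL lam φ T k ↔ satL lam ψ T k))
    ↔
    (∀ (lam : ℕ∞) (H T : ℕ → Set α), isHT H T → ∀ k : ℕ, (k : ℕ∞) ≤ lam →
        (sat lam φ H T k ↔ sat lam ψ H T k)) := by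
  constructor
  · intro h lam H T _ k hk
    rw [sat_eq_satL lam φ hφ, sat_eq_satL lam ψ hψ]
    exact h lam H k hk
  · intro h lam T k hk
    rw [← sat_eq_satL lam φ hφ T T, ← sat_eq_satL lam ψ hψ T T]
    exact h lam T T (fun i => le_refl _) k hk
end

section
/- Temporal reversal lemma: there exists a mapping ϱ on finite HT-traces preserving length such that for any finite HT-trace ⟨H,T⟩ of length n, any formula φ, and any k with 0 ≤ k ≤ n, ⟨H,T⟩, k ⊨ φ iff ϱ(⟨H,T⟩), n−k ⊨ σ(φ), where σ swaps each temporal connective with its time-reversed counterpart (U/S, R/T, ○/●, ŏ/weak previous, □/■, ◇/♦). -/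
open scoped Classical

variable {α : Type}

lemma enat_succ_le {a b : ℕ} : ((a : ℕ∞) + 1 ≤ (b : ℕ∞)) ↔ a + 1 ≤ b := by
  rw [← Nat.cast_one, ← Nat.cast_add, Nat.cast_le]

lemma rev_sat {α : Type} (n : ℕ) (φ : TForm α) :
    ∀ (H T : ℕ → Set α) (k : ℕ), k ≤ n →
      (sat (n : ℕ∞) φ H T k ↔
        sat (n : ℕ∞) (tswap φ) (fun i => H (n - i)) (fun i => T (n - i)) (n - k)) := by
  induction φ with
  | atom a =>
    intro H T k hk
    simp only [sat, tswap]
    rw [Nat.sub_sub_self hk]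
  | bot => intro H T k hk; simp [sat, tswap]
  | top => intro H T k hk; simp [sat, tswap]
  | and φ ψ ihφ ihψ =>
    intro H T k hk
    simp only [sat, tswap]
    exact and_congr (ihφ H T k hk) (ihψ H T k hk)
  | or φ ψ ihφ ihψ =>
    intro H T k hk
    simp only [sat, tswap]
    exact or_congr (ihφ H T k hk) (ihψ H T k hk)
  | imp φ ψ ihφ ihψ =>
    intro H T k hk
    simp only [sat, tswap]
    exact and_congr (imp_congr (ihφ H T k hk) (ihψ H T k hk))
      (imp_congr (ihφ T T k hk) (ihψ T T k hk))
  | prev φ ih =>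
    intro H T k hk
    simp only [sat, tswap]
    rw [enat_succ_le]
    constructor
    · rintro ⟨hk0, hs⟩
      refine ⟨by omega, ?_⟩
      have h2 := (ih H T (k - 1) (by omega)).mp hs
      rwa [show n - (k - 1) = n - k + 1 by omega] at h2
    · rintro ⟨hc, hs⟩
      refine ⟨by omega, ?_⟩
      apply (ih H T (k - 1) (by omega)).mpr
      rwa [show n - (k - 1) = n - k + 1 by omega]
  | wprev φ ih =>
    intro H T k hk
    simp only [sat, tswap]
    rw [enat_succ_le]
    constructor
    · rintro (h0 | hs)
      · left; omega
      · by_cases hk0 : k = 0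
        · left; omega
        · right
          have h2 := (ih H T (k - 1) (by omega)).mp hs
          rwa [show n - (k - 1) = n - k + 1 by omega] at h2
    · rintro (h0 | hs)
      · left; omega
      · by_cases hk0 : k = 0
        · left; exact hk0
        · right
          apply (ih H T (k - 1) (by omega)).mpr
          rwa [show n - (k - 1) = n - k + 1 by omega]
  | next φ ih =>
    intro H T k hk
    simp only [sat, tswap]
    rw [enat_succ_le]
    constructor
    · rintro ⟨hc, hs⟩
      have hc' : k + 1 ≤ n := by exact_mod_cast hc
      refine ⟨by omega, ?_⟩
      have h2 := (ih H T (k + 1) hc').mp hs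
      rwa [show n - (k + 1) = n - k - 1 by omega] at h2
    · rintro ⟨hc, hs⟩
      have hc' : k + 1 ≤ n := by omega
      refine ⟨by exact_mod_cast hc', ?_⟩
      apply (ih H T (k + 1) hc').mpr
      rwa [show n - (k + 1) = n - k - 1 by omega]
  | wnext φ ih =>
    intro H T k hk
    simp only [sat, tswap]
    rw [enat_succ_le]
    constructor
    · rintro (hc | hs)
      · have hc' : ¬ (k + 1 ≤ n) := fun h => hc (by exact_mod_cast h)
        left; omega
      · by_cases hkn : k + 1 ≤ n
        · right
          have h2 := (ih H T (k + 1) hkn).mp hs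
          rwa [show n - (k + 1) = n - k - 1 by omega] at h2
        · left; omega
    · rintro (hc | hs)
      · left
        intro h
        have : k + 1 ≤ n := by exact_mod_cast h
        omega
      · by_cases hkn : k + 1 ≤ n
        · right
          apply (ih H T (k + 1) hkn).mpr
          rwa [show n - (k + 1) = n - k - 1 by omega]
        · left
          intro h
          have : k + 1 ≤ n := by exact_mod_cast h
          omega
  | since φ ψ ihφ ihψ =>
    intro H T k hk
    simp only [sat, tswap]
    constructor
    · rintro ⟨j, hj, hψ, hφ⟩
      refine ⟨n - j, by omega, by exact_mod_cast Nat.sub_le n j,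
        (ihψ H T j (by omega)).mp hψ, ?_⟩
      intro i hi1 hi2
      have hin : i ≤ n := by omega
      have h := hφ (n - i) (by omega) (by omega)
      have h2 := (ihφ H T (n - i) (by omega)).mp h
      rwa [Nat.sub_sub_self hin] at h2
    · rintro ⟨j, hj1, hj2, hψ, hφ⟩
      have hjn : j ≤ n := by exact_mod_cast hj2
      refine ⟨n - j, by omega, ?_, ?_⟩
      · apply (ihψ H T (n - j) (by omega)).mpr
        rwa [Nat.sub_sub_self hjn]
      · intro i h1 h2
        have := hφ (n - i) (by omega) (by omega)
        exact (ihφ H T i (by omega)).mpr this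
  | untl φ ψ ihφ ihψ =>
    intro H T k hk
    simp only [sat, tswap]
    constructor
    · rintro ⟨j, hj, hjc, hψ, hφ⟩
      have hjn : j ≤ n := by exact_mod_cast hjc
      refine ⟨n - j, by omega, (ihψ H T j hjn).mp hψ, ?_⟩
      intro i hi1 hi2
      have hin : i ≤ n := by omega
      have h := hφ (n - i) (by omega) (by omega)
      have h2 := (ihφ H T (n - i) (by omega)).mp h
      rwa [Nat.sub_sub_self hin] at h2
    · rintro ⟨j, hj, hψ, hφ⟩
      refine ⟨n - j, by omega, by exact_mod_cast Nat.sub_le n j, ?_, ?_⟩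
      · apply (ihψ H T (n - j) (by omega)).mpr
        rw [Nat.sub_sub_self (by omega : j ≤ n)]
        exact hψ
      · intro i h1 h2
        have := hφ (n - i) (by omega) (by omega)
        exact (ihφ H T i (by omega)).mpr this
  | trigger φ ψ ihφ ihψ =>
    intro H T k hk
    simp only [sat, tswap]
    constructor
    · intro h j hj1 hj2
      have hjn : j ≤ n := by exact_mod_cast hj2
      rcases h (n - j) (by omega) with hψ | ⟨i, hi1, hi2, hs⟩
      · left
        have h2 := (ihψ H T (n - j) (by omega)).mp hψ
        rwa [Nat.sub_sub_self hjn] at h2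
      · right
        exact ⟨n - i, by omega, by omega, (ihφ H T i (by omega)).mp hs⟩
    · intro h j hj
      rcases h (n - j) (by omega) (by exact_mod_cast Nat.sub_le n j) with
        hψ | ⟨i, hi1, hi2, hs⟩
      · left
        exact (ihψ H T j (by omega)).mpr hψ
      · right
        refine ⟨n - i, by omega, by omega, ?_⟩
        apply (ihφ H T (n - i) (by omega)).mpr
        rwa [Nat.sub_sub_self (by omega : i ≤ n)]
  | rels φ ψ ihφ ihψ =>
    intro H T k hk
    simp only [sat, tswap]
    constructor
    · intro h j hj
      rcases h (n - j) (by omega) (by exact_mod_cast Nat.sub_le n j) with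
        hψ | ⟨i, hi1, hi2, hs⟩
      · left
        have h2 := (ihψ H T (n - j) (by omega)).mp hψ
        rwa [Nat.sub_sub_self (by omega : j ≤ n)] at h2
      · right
        refine ⟨n - i, by omega, by omega, ?_⟩
        exact (ihφ H T i (by omega)).mp hs
    · intro h j hj1 hj2
      have hjn : j ≤ n := by exact_mod_cast hj2
      rcases h (n - j) (by omega) with hψ | ⟨i, hi1, hi2, hs⟩
      · left
        exact (ihψ H T j hjn).mpr hψ
      · right
        refine ⟨n - i, by omega, by omega, ?_⟩
        apply (ihφ H T (n - i) (by omega)).mpr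
        rwa [Nat.sub_sub_self (by omega : i ≤ n)]

/-- Temporal reversal lemma: there is a length-preserving mapping ϱ on finite
    traces (applied componentwise to the HT-trace) such that
    ⟨H,T⟩,k ⊨ φ iff ϱ(⟨H,T⟩),n−k ⊨ σ(φ). -/
theorem temporal_reversal {α : Type} :
    ∃ ρ : ℕ → (ℕ → Set α) → (ℕ → Set α),
      ∀ (n : ℕ) (H T : ℕ → Set α), isHT H T →
        ∀ (φ : TForm α) (k : ℕ), k ≤ n →
          (sat (n : ℕ∞) φ H T k ↔ sat (n : ℕ∞) (tswap φ) (ρ n H) (ρ n T) (n - k)) := by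
  exact ⟨fun n H i => H (n - i), fun n H T _ φ k hk => rev_sat n φ H T k hk⟩
end

section
/- Temporal Duality Theorem: a temporal formula φ is a THT_f-tautology (true in all finite HT-traces at all time points) if and only if σ(φ) is a THT_f-tautology, where σ swaps each temporal connective with its time-reversed counterpart. -/
open scoped Classical

variable {α : Type}

/-- φ is a THT_f-tautology: true in all finite HT-traces at all time points. -/
def THTfTautology {α : Type} (φ : TForm α) : Prop :=
  ∀ (n : ℕ) (H T : ℕ → Set α), isHT H T → ∀ k : ℕ, k ≤ n → sat (n : ℕ∞) φ H T k

/-- Trace reversal on `{0,…,n}` (identity above `n`, making it an involution). -/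
def trev {α : Type} (n : ℕ) (H : ℕ → Set α) : ℕ → Set α :=
  fun i => if i ≤ n then H (n - i) else H i

lemma trev_apply {α : Type} (n : ℕ) (H : ℕ → Set α) {i : ℕ} (h : i ≤ n) :
    trev n H i = H (n - i) := if_pos h

lemma trev_trev {α : Type} (n : ℕ) (H : ℕ → Set α) : trev n (trev n H) = H := by
  funext i
  by_cases h : i ≤ n
  · simp [trev, h, Nat.sub_le, Nat.sub_sub_self h]
  · simp [trev, h]

lemma isHT_trev {α : Type} (n : ℕ) {H T : ℕ → Set α} (h : isHT H T) :
    isHT (trev n H) (trev n T) := by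
  intro i
  by_cases hi : i ≤ n <;> simp [trev, hi] <;> apply h

lemma enat_le {j n : ℕ} : ((j : ℕ∞) ≤ (n : ℕ∞)) ↔ j ≤ n := Nat.cast_le

lemma enat_succ_le_s9 {k n : ℕ} : ((k : ℕ∞) + 1 ≤ (n : ℕ∞)) ↔ k + 1 ≤ n := by
  exact_mod_cast Iff.rfl

lemma tswap_tswap {α : Type} (φ : TForm α) : tswap (tswap φ) = φ := by
  induction φ <;> simp [tswap, *]

/-- Temporal reversal lemma: satisfaction of φ at k on a trace of length n
    equals satisfaction of σ(φ) at n−k on the reversed trace. -/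
lemma sat_trev {α : Type} (n : ℕ) (φ : TForm α) :
    ∀ (H T : ℕ → Set α) (k : ℕ), k ≤ n →
      (sat (n : ℕ∞) φ H T k ↔ sat (n : ℕ∞) (tswap φ) (trev n H) (trev n T) (n - k)) := by
  induction φ with
  | atom a =>
      intro H T k hk
      simp [sat, tswap, trev_apply n H (Nat.sub_le n k), Nat.sub_sub_self hk]
  | bot => intro H T k hk; simp [sat, tswap]
  | top => intro H T k hk; simp [sat, tswap]
  | and φ ψ ih1 ih2 =>
      intro H T k hk
      simp [sat, tswap, ih1 H T k hk, ih2 H T k hk]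
  | or φ ψ ih1 ih2 =>
      intro H T k hk
      simp [sat, tswap, ih1 H T k hk, ih2 H T k hk]
  | imp φ ψ ih1 ih2 =>
      intro H T k hk
      simp only [sat, tswap]
      rw [ih1 H T k hk, ih2 H T k hk, ih1 T T k hk, ih2 T T k hk]
  | prev φ ih =>
      intro H T k hk
      simp only [sat, tswap]
      constructor
      · rintro ⟨hk0, hs⟩
        refine ⟨enat_succ_le_s9.mpr (by omega), ?_⟩
        have h1 : n - k + 1 = n - (k - 1) := by omega
        rw [h1]
        exact (ih H T (k - 1) (by omega)).mp hs
      · rintro ⟨hle, hs⟩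
        have hle' := enat_succ_le_s9.mp hle
        have hk0 : 0 < k := by omega
        refine ⟨hk0, ?_⟩
        have h1 : n - k + 1 = n - (k - 1) := by omega
        rw [h1] at hs
        exact (ih H T (k - 1) (by omega)).mpr hs
  | wprev φ ih =>
      intro H T k hk
      simp only [sat, tswap]
      constructor
      · rintro (hk0 | hs)
        · left
          intro hle
          have := enat_succ_le_s9.mp hle
          omega
        · by_cases hk0 : k = 0
          · left
            intro hle
            have := enat_succ_le_s9.mp hle
            omega
          · right
            have h1 : n - k + 1 = n - (k - 1) := by omega
            rw [h1]
            exact (ih H T (k - 1) (by omega)).mp hs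
      · rintro (hle | hs)
        · left
          by_contra hk0
          exact hle (enat_succ_le_s9.mpr (by omega))
        · by_cases hk0 : k = 0
          · exact Or.inl hk0
          · right
            have h1 : n - k + 1 = n - (k - 1) := by omega
            rw [h1] at hs
            exact (ih H T (k - 1) (by omega)).mpr hs
  | since φ ψ ih1 ih2 =>
      intro H T k hk
      simp only [sat, tswap]
      constructor
      · rintro ⟨j, hj, hψ, hφ⟩
        refine ⟨n - j, by omega, enat_le.mpr (by omega),
          (ih2 H T j (by omega)).mp hψ, ?_⟩
        intro i' h1 h2
        have hi' : i' ≤ n := by omega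
        have h3 : j < n - i' := by omega
        have h4 : n - i' ≤ k := by omega
        have := (ih1 H T (n - i') (by omega)).mp (hφ (n - i') h3 h4)
        rwa [Nat.sub_sub_self hi'] at this
      · rintro ⟨j', hj', hle, hψ, hφ⟩
        have hjn : j' ≤ n := enat_le.mp hle
        refine ⟨n - j', by omega, ?_, ?_⟩
        · have := (ih2 H T (n - j') (by omega)).mpr
          rw [Nat.sub_sub_self hjn] at this
          exact this hψ
        · intro i h1 h2
          have hin : i ≤ n := by omega
          have h0 := hφ (n - i) (by omega) (by omega)
          exact (ih1 H T i hin).mpr h0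
  | trigger φ ψ ih1 ih2 =>
      intro H T k hk
      simp only [sat, tswap]
      constructor
      · intro h j' hj' hle
        have hjn : j' ≤ n := enat_le.mp hle
        rcases h (n - j') (by omega) with hψ | ⟨i, hi1, hi2, hφ⟩
        · left
          have := (ih2 H T (n - j') (by omega)).mp hψ
          rwa [Nat.sub_sub_self hjn] at this
        · right
          refine ⟨n - i, by omega, by omega, ?_⟩
          exact (ih1 H T i (by omega)).mp hφ
      · intro h j hj
        have hjn : j ≤ n := by omega
        rcases h (n - j) (by omega) (enat_le.mpr (by omega)) with hψ | ⟨i', hi1, hi2, hφ⟩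
        · left
          exact (ih2 H T j hjn).mpr hψ
        · right
          have hi'n : i' ≤ n := by omega
          refine ⟨n - i', by omega, by omega, ?_⟩
          have := (ih1 H T (n - i') (by omega)).mpr
          rw [Nat.sub_sub_self hi'n] at this
          exact this hφ
  | next φ ih =>
      intro H T k hk
      simp only [sat, tswap]
      constructor
      · rintro ⟨hle, hs⟩
        have hle' := enat_succ_le_s9.mp hle
        refine ⟨by omega, ?_⟩
        have h1 : n - k - 1 = n - (k + 1) := by omega
        rw [h1]
        exact (ih H T (k + 1) (by omega)).mp hs
      · rintro ⟨hk0, hs⟩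
        refine ⟨enat_succ_le_s9.mpr (by omega), ?_⟩
        have h1 : n - k - 1 = n - (k + 1) := by omega
        rw [h1] at hs
        exact (ih H T (k + 1) (by omega)).mpr hs
  | wnext φ ih =>
      intro H T k hk
      simp only [sat, tswap]
      constructor
      · rintro (hle | hs)
        · have : k = n := by
            by_contra h
            exact hle (enat_succ_le_s9.mpr (by omega))
          left; omega
        · by_cases hkn : k = n
          · left; omega
          · right
            have h1 : n - k - 1 = n - (k + 1) := by omega
            rw [h1]
            exact (ih H T (k + 1) (by omega)).mp hs
      · rintro (hk0 | hs)
        · left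
          intro hle
          have := enat_succ_le_s9.mp hle
          omega
        · by_cases hkn : k = n
          · left
            intro hle
            have := enat_succ_le_s9.mp hle
            omega
          · right
            have h1 : n - k - 1 = n - (k + 1) := by omega
            rw [h1] at hs
            exact (ih H T (k + 1) (by omega)).mpr hs
  | untl φ ψ ih1 ih2 =>
      intro H T k hk
      simp only [sat, tswap]
      constructor
      · rintro ⟨j, hj, hle, hψ, hφ⟩
        have hjn : j ≤ n := enat_le.mp hle
        refine ⟨n - j, by omega, ?_, ?_⟩
        · exact (ih2 H T j hjn).mp hψ
        · intro i' h1 h2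
          have hi'n : i' ≤ n := by omega
          have := (ih1 H T (n - i') (by omega)).mp (hφ (n - i') (by omega) (by omega))
          rwa [Nat.sub_sub_self hi'n] at this
      · rintro ⟨j', hj', hψ, hφ⟩
        have hj'n : j' ≤ n := by omega
        refine ⟨n - j', by omega, enat_le.mpr (by omega), ?_, ?_⟩
        · have h3 := (ih2 H T (n - j') (by omega)).mpr
          rw [Nat.sub_sub_self hj'n] at h3
          exact h3 hψ
        · intro i h1 h2
          have hin : i ≤ n := by omega
          have h0 := hφ (n - i) (by omega) (by omega)
          exact (ih1 H T i hin).mpr h0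
  | rels φ ψ ih1 ih2 =>
      intro H T k hk
      simp only [sat, tswap]
      constructor
      · intro h j' hj'
        rcases h (n - j') (by omega) (enat_le.mpr (by omega)) with hψ | ⟨i, hi1, hi2, hφ⟩
        · left
          have h3 := (ih2 H T (n - j') (by omega)).mp hψ
          rwa [Nat.sub_sub_self (by omega : j' ≤ n)] at h3
        · right
          exact ⟨n - i, by omega, by omega, (ih1 H T i (by omega)).mp hφ⟩
      · intro h j hjk hle
        have hjn : j ≤ n := enat_le.mp hle
        rcases h (n - j) (by omega) with hψ | ⟨i', hi1, hi2, hφ⟩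
        · left
          exact (ih2 H T j hjn).mpr hψ
        · right
          have hi'n : i' ≤ n := by omega
          refine ⟨n - i', by omega, by omega, ?_⟩
          have h3 := (ih1 H T (n - i') (by omega)).mpr
          rw [Nat.sub_sub_self hi'n] at h3
          exact h3 hφ

/-- Temporal Duality Theorem: φ is a THT_f-tautology iff σ(φ) is. -/
theorem temporal_duality {α : Type} (φ : TForm α) :
    THTfTautology φ ↔ THTfTautology (tswap φ) := by
  have key : ∀ (ψ : TForm α), THTfTautology ψ → THTfTautology (tswap ψ) := by
    intro ψ h n H T ht k hk
    have h1 := h n (trev n H) (trev n T) (isHT_trev n ht) (n - k) (Nat.sub_le n k)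
    have h2 := (sat_trev n ψ (trev n H) (trev n T) (n - k) (Nat.sub_le n k)).mp h1
    rwa [trev_trev, trev_trev, Nat.sub_sub_self hk] at h2
  constructor
  · exact key φ
  · intro h
    have := key (tswap φ) h
    rwa [tswap_tswap] at this
end

section
/- Under the excluded-middle axiom schema, models are total: an HT-trace ⟨H,T⟩ of length λ satisfies □(a ∨ ¬a) at time 0 for every atom a ∈ 𝒜 if and only if H = T. -/
open scoped Classical

variable {α : Type}

/-- an HT-trace satisfies □(a ∨ ¬a) at 0 for every atom a iff it is total
    (H and T coincide on all time points of the trace). -/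
theorem excluded_middle_total {α : Type} (lam : ℕ∞) (H T : ℕ → Set α) (hHT : isHT H T) :
    (∀ a : α, sat lam (TForm.always (.or (.atom a) (TForm.neg (.atom a)))) H T 0)
    ↔ (∀ i : ℕ, (i : ℕ∞) ≤ lam → H i = T i) := by
  constructor
  · intro h i hi
    ext a
    constructor
    · exact fun ha => hHT i ha
    · intro ha
      have := h a i (Nat.zero_le i) hi
      rcases this with h1 | ⟨j, _, _, hj⟩
      · rcases h1 with h2 | h2
        · exact h2
        · exact (h2.2 ha).elim
      · exact hj.elim
  · intro h a j _ hj
    left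
    by_cases ha : a ∈ H j
    · exact Or.inl ha
    · exact Or.inr ⟨fun h' => ha h', fun h' => ha ((h j hj) ▸ h')⟩
end

section
/- The formula □◇a has no temporal equilibrium model among infinite traces: for any total infinite HT-trace ⟨T,T⟩ satisfying □◇a at time 0, there exists H < T such that ⟨H,T⟩ also satisfies □◇a at time 0. -/
open scoped Classical

variable {α : Type}

/-- □◇a has no temporal equilibrium model among infinite traces:
    any total infinite model ⟨T,T⟩ of □◇a admits some H < T with ⟨H,T⟩ ⊨ □◇a. -/
theorem no_infinite_equilibrium {α : Type} (a : α) (T : ℕ → Set α)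
    (h : sat ⊤ (TForm.always (TForm.ev (.atom a))) T T 0) :
    ∃ H : ℕ → Set α,
      ((∀ i : ℕ, H i ⊆ T i) ∧ ∃ j : ℕ, H j ⊂ T j) ∧
      sat ⊤ (TForm.always (TForm.ev (.atom a))) H T 0 := by
  have inf : ∀ k : ℕ, ∃ j, k ≤ j ∧ a ∈ T j := by
    intro k
    have hk := h k (Nat.zero_le k) le_top
    rcases hk with hk | ⟨i, _, _, hbot⟩
    · rcases hk with ⟨j, hkj, _, haj, _⟩
      exact ⟨j, hkj, haj⟩
    · exact absurd hbot (by simp [sat])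
  obtain ⟨i0, _, hi0⟩ := inf 0
  refine ⟨fun i => if i = i0 then T i \ {a} else T i, ⟨?_, ⟨i0, ?_⟩⟩, ?_⟩
  · intro i; by_cases hi : i = i0 <;> simp [hi, Set.diff_subset]
  · simp only [if_pos rfl]
    exact ⟨Set.diff_subset, fun hsub => (hsub hi0).2 rfl⟩
  · intro j _ _
    left
    obtain ⟨j', hj', haj'⟩ := inf (max j (i0 + 1))
    refine ⟨j', le_trans (le_max_left _ _) hj', le_top, ?_, fun _ _ _ => trivial⟩
    have hne : j' ≠ i0 := by
      have := le_trans (le_max_right _ _) hj'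
      omega
    simpa [sat, hne] using haj'
end

section
/- Bounded translation correctness: let P be a temporal logic program over atoms 𝒜 and λ ∈ ℕ. For a trace T = ⟨T_i⟩_{i=0}^λ and the set X = {a_i : a ∈ T_i, 0 ≤ i ≤ λ} of time-stamped atoms, T is a temporal stable model of P (of length λ) iff X is a stable model of the regular logic program τ_λ(P). -/
open scoped Classical

variable {α : Type}

/-- Regular literals: a or ¬a. -/
inductive RLit (β : Type) : Type
  | pos : β → RLit β
  | neg : β → RLit β

/-- Temporal literals: a, ¬a, ●a, ¬●a. -/
inductive TLit (α : Type) : Type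
  | pos : α → TLit α
  | neg : α → TLit α
  | ppos : α → TLit α
  | pneg : α → TLit α

def RLit.form {α : Type} : RLit α → TForm α
  | .pos a => .atom a
  | .neg a => TForm.neg (.atom a)

def TLit.form {α : Type} : TLit α → TForm α
  | .pos a => .atom a
  | .neg a => TForm.neg (.atom a)
  | .ppos a => .prev (.atom a)
  | .pneg a => TForm.neg (.prev (.atom a))

def conj {α β : Type} (f : β → TForm α) : List β → TForm α
  | [] => .top
  | l :: ls => .and (f l) (conj f ls)

def disj {α β : Type} (f : β → TForm α) : List β → TForm α
  | [] => .bot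
  | l :: ls => .or (f l) (disj f ls)

/-- A temporal logic program: initial rules B → A, dynamic rules ŏ□(B → A),
    final rules □(F → (B → A)); each rule is given as a pair (body, head). -/
structure TProgram (α : Type) where
  ini : Set (List (RLit α) × List (RLit α))
  dyn : Set (List (TLit α) × List (TLit α))
  fin : Set (List (RLit α) × List (RLit α))

def iniForm {α : Type} (r : List (RLit α) × List (RLit α)) : TForm α :=
  .imp (conj RLit.form r.1) (disj RLit.form r.2)

def dynForm {α : Type} (r : List (TLit α) × List (TLit α)) : TForm α :=
  .wnext (TForm.always (.imp (conj TLit.form r.1) (disj TLit.form r.2)))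

def finForm {α : Type} (r : List (RLit α) × List (RLit α)) : TForm α :=
  TForm.always (.imp TForm.F (.imp (conj RLit.form r.1) (disj RLit.form r.2)))

/-- ⟨H,T⟩ of length lam satisfies (all rules of) the temporal program P at time 0. -/
def ProgSat {α : Type} (lam : ℕ∞) (H T : ℕ → Set α) (P : TProgram α) : Prop :=
  (∀ r ∈ P.ini, sat lam (iniForm r) H T 0) ∧
  (∀ r ∈ P.dyn, sat lam (dynForm r) H T 0) ∧
  (∀ r ∈ P.fin, sat lam (finForm r) H T 0)

/-- T is a temporal stable model of P of finite length n (equilibrium model in TEL_f). -/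
def TStable {α : Type} (P : TProgram α) (n : ℕ) (T : ℕ → Set α) : Prop :=
  ProgSat (n : ℕ∞) T T P ∧
  ¬ ∃ H : ℕ → Set α,
      ((∀ i, i ≤ n → H i ⊆ T i) ∧ ∃ i, i ≤ n ∧ H i ≠ T i) ∧
      ProgSat (n : ℕ∞) H T P

/-- HT ("here") satisfaction of a regular literal w.r.t. interpretations ⟨Y,X⟩. -/
def rlitSatHT {β : Type} (Y X : Set β) : RLit β → Prop
  | .pos b => b ∈ Y
  | .neg b => b ∉ X

/-- Classical satisfaction of a regular literal in X. -/
def rlitSatC {β : Type} (X : Set β) : RLit β → Prop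
  | .pos b => b ∈ X
  | .neg b => b ∉ X

/-- A regular (disjunctive) rule: head ← body. -/
structure RRule (β : Type) where
  body : List (RLit β)
  head : List (RLit β)

/-- HT satisfaction of a regular rule at ⟨Y,X⟩ (here-and-there implication). -/
def rruleSatHT {β : Type} (Y X : Set β) (r : RRule β) : Prop :=
  ((∀ l ∈ r.body, rlitSatHT Y X l) → ∃ l ∈ r.head, rlitSatHT Y X l) ∧
  ((∀ l ∈ r.body, rlitSatC X l) → ∃ l ∈ r.head, rlitSatC X l)

/-- X is a stable model of the regular program P (equilibrium model of HT). -/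
def Stable {β : Type} (P : Set (RRule β)) (X : Set β) : Prop :=
  (∀ r ∈ P, rruleSatHT X X r) ∧ ¬ ∃ Y : Set β, Y ⊂ X ∧ ∀ r ∈ P, rruleSatHT Y X r

/-- Translation of a regular literal at time point k to a time-stamped literal. -/
def trR {α : Type} (k : ℕ) : RLit α → RLit (α × ℕ)
  | .pos a => .pos (a, k)
  | .neg a => .neg (a, k)

/-- Translation of a temporal literal at time point k to a time-stamped literal. -/
def trT {α : Type} (k : ℕ) : TLit α → RLit (α × ℕ)
  | .pos a => .pos (a, k)
  | .neg a => .neg (a, k)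
  | .ppos a => .pos (a, k - 1)
  | .pneg a => .neg (a, k - 1)

/-- The bounded translation τ_λ(P): initial rules at 0, dynamic rules at k = 1..λ,
    final rules at λ. -/
def tau {α : Type} (n : ℕ) (P : TProgram α) : Set (RRule (α × ℕ)) :=
  {r | ∃ p ∈ P.ini, r = ⟨p.1.map (trR 0), p.2.map (trR 0)⟩} ∪
  {r | ∃ p ∈ P.dyn, ∃ k, 1 ≤ k ∧ k ≤ n ∧ r = ⟨p.1.map (trT k), p.2.map (trT k)⟩} ∪
  {r | ∃ p ∈ P.fin, r = ⟨p.1.map (trR n), p.2.map (trR n)⟩}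

section AuxProof

lemma rlitHT_self {β : Type} (X : Set β) (l : RLit β) :
    rlitSatHT X X l ↔ rlitSatC X l := by cases l <;> rfl

lemma sat_rlit {α : Type} {n : ℕ} {H T : ℕ → Set α} {Y X : Set (α × ℕ)}
    (hH : ∀ (a : α) (i : ℕ), i ≤ n → (a ∈ H i ↔ (a, i) ∈ Y))
    (hT : ∀ (a : α) (i : ℕ), i ≤ n → (a ∈ T i ↔ (a, i) ∈ X))
    (hsub : ∀ i, i ≤ n → H i ⊆ T i)
    {k : ℕ} (hk : k ≤ n) (l : RLit α) :
    sat (n : ℕ∞) (RLit.form l) H T k ↔ rlitSatHT Y X (trR k l) := by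
  cases l with
  | pos a => simpa [RLit.form, trR, sat, rlitSatHT] using hH a k hk
  | neg a =>
    simp only [RLit.form, TForm.neg, trR, sat, rlitSatHT]
    constructor
    · intro h hx
      exact h.2 ((hT a k hk).2 hx)
    · intro h
      exact ⟨fun ha => h ((hT a k hk).1 (hsub k hk ha)),
             fun ha => h ((hT a k hk).1 ha)⟩

lemma sat_tlit {α : Type} {n : ℕ} {H T : ℕ → Set α} {Y X : Set (α × ℕ)}
    (hH : ∀ (a : α) (i : ℕ), i ≤ n → (a ∈ H i ↔ (a, i) ∈ Y))
    (hT : ∀ (a : α) (i : ℕ), i ≤ n → (a ∈ T i ↔ (a, i) ∈ X))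
    (hsub : ∀ i, i ≤ n → H i ⊆ T i)
    {k : ℕ} (hk1 : 1 ≤ k) (hk : k ≤ n) (l : TLit α) :
    sat (n : ℕ∞) (TLit.form l) H T k ↔ rlitSatHT Y X (trT k l) := by
  have hk' : k - 1 ≤ n := le_trans (Nat.sub_le k 1) hk
  have hpos : 0 < k := hk1
  cases l with
  | pos a => simpa [TLit.form, trT, sat, rlitSatHT] using hH a k hk
  | neg a =>
    simp only [TLit.form, TForm.neg, trT, sat, rlitSatHT]
    constructor
    · intro h hx
      exact h.2 ((hT a k hk).2 hx)
    · intro h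
      exact ⟨fun ha => h ((hT a k hk).1 (hsub k hk ha)),
             fun ha => h ((hT a k hk).1 ha)⟩
  | ppos a =>
    simp only [TLit.form, trT, sat, rlitSatHT]
    constructor
    · intro h; exact (hH a (k-1) hk').1 h.2
    · intro h; exact ⟨hpos, (hH a (k-1) hk').2 h⟩
  | pneg a =>
    simp only [TLit.form, TForm.neg, trT, sat, rlitSatHT]
    constructor
    · intro h hx
      exact h.2 ⟨hpos, (hT a (k-1) hk').2 hx⟩
    · intro h
      exact ⟨fun ha => h ((hT a (k-1) hk').1 (hsub (k-1) hk' ha.2)),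
             fun ha => h ((hT a (k-1) hk').1 ha.2)⟩

lemma sat_conj {α β : Type} (n : ℕ∞) (f : β → TForm α) (H T : ℕ → Set α) (k : ℕ) :
    ∀ L : List β, sat n (conj f L) H T k ↔ ∀ x ∈ L, sat n (f x) H T k
  | [] => by simp [conj, sat]
  | x :: L => by
      simp [conj, sat, sat_conj n f H T k L]

lemma sat_disj {α β : Type} (n : ℕ∞) (f : β → TForm α) (H T : ℕ → Set α) (k : ℕ) :
    ∀ L : List β, sat n (disj f L) H T k ↔ ∃ x ∈ L, sat n (f x) H T k
  | [] => by simp [disj, sat]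
  | x :: L => by
      simp [disj, sat, sat_disj n f H T k L]

lemma sat_rule {α β : Type} {n : ℕ∞} {H T : ℕ → Set α} {Y X : Set (α × ℕ)}
    (f : β → TForm α) (g : β → RLit (α × ℕ)) (B Hd : List β) (k : ℕ)
    (h1 : ∀ l, l ∈ B ∨ l ∈ Hd → (sat n (f l) H T k ↔ rlitSatHT Y X (g l)))
    (h2 : ∀ l, l ∈ B ∨ l ∈ Hd → (sat n (f l) T T k ↔ rlitSatC X (g l))) :
    sat n (.imp (conj f B) (disj f Hd)) H T k ↔
      rruleSatHT Y X ⟨B.map g, Hd.map g⟩ := by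
  simp only [sat, rruleSatHT, sat_conj, sat_disj, List.mem_map,
    forall_exists_index, and_imp]
  constructor
  · rintro ⟨p, q⟩
    constructor
    · intro hb
      obtain ⟨x, hx, hsx⟩ := p (fun x hx => (h1 x (Or.inl hx)).2 (hb (g x) x hx rfl))
      exact ⟨g x, ⟨x, hx, rfl⟩, (h1 x (Or.inr hx)).1 hsx⟩
    · intro hb
      obtain ⟨x, hx, hsx⟩ := q (fun x hx => (h2 x (Or.inl hx)).2 (hb (g x) x hx rfl))
      exact ⟨g x, ⟨x, hx, rfl⟩, (h2 x (Or.inr hx)).1 hsx⟩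
  · rintro ⟨p, q⟩
    constructor
    · intro hb
      obtain ⟨l, ⟨x, hx, rfl⟩, hsx⟩ := p (fun l x hx hl => hl ▸ (h1 x (Or.inl hx)).1 (hb x hx))
      exact ⟨x, hx, (h1 x (Or.inr hx)).2 hsx⟩
    · intro hb
      obtain ⟨l, ⟨x, hx, rfl⟩, hsx⟩ := q (fun l x hx hl => hl ▸ (h2 x (Or.inl hx)).1 (hb x hx))
      exact ⟨x, hx, (h2 x (Or.inr hx)).2 hsx⟩

lemma sat_dynForm {α : Type} {n : ℕ} {H T : ℕ → Set α}
    (r : List (TLit α) × List (TLit α)) :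
    sat (n : ℕ∞) (dynForm r) H T 0 ↔
      ∀ k, 1 ≤ k → k ≤ n →
        sat (n : ℕ∞) (.imp (conj TLit.form r.1) (disj TLit.form r.2)) H T k := by
  have hcast : ∀ j : ℕ, ((j : ℕ∞) ≤ (n : ℕ∞)) ↔ j ≤ n := fun j => Nat.cast_le
  have h01 : ((0 : ℕ) : ℕ∞) + 1 = ((1 : ℕ) : ℕ∞) := by norm_num
  simp only [dynForm, TForm.always, sat]
  constructor
  · rintro (h | h) k hk1 hkn
    · exact absurd (h01 ▸ (hcast 1).2 (le_trans hk1 hkn)) h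
    · rcases h k hk1 ((hcast k).2 hkn) with h' | ⟨i, _, _, h'⟩
      · exact h'
      · exact h'.elim
  · intro h
    by_cases hn : 1 ≤ n
    · refine Or.inr (fun j hj1 hjn => Or.inl (h j hj1 ((hcast j).1 hjn)))
    · exact Or.inl (fun hc => hn ((hcast 1).1 (h01 ▸ hc)))

lemma sat_finForm {α : Type} {n : ℕ} {H T : ℕ → Set α}
    (r : List (RLit α) × List (RLit α)) :
    sat (n : ℕ∞) (finForm r) H T 0 ↔
      sat (n : ℕ∞) (.imp (conj RLit.form r.1) (disj RLit.form r.2)) H T n := by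
  have hF : ∀ (H' : ℕ → Set α) (j : ℕ), sat (n : ℕ∞) TForm.F H' T j ↔ n ≤ j := by
    intro H' j
    have : ((j : ℕ∞) + 1 ≤ (n : ℕ∞)) ↔ j + 1 ≤ n := by
      rw [← Nat.cast_one, ← Nat.cast_add, Nat.cast_le]
    simp only [TForm.F, TForm.neg, sat, and_true, this]
    constructor
    · intro h
      by_contra hc
      exact h.2 (Nat.succ_le_of_lt (Nat.lt_of_not_le hc))
    · intro h
      exact ⟨fun hc => absurd h (Nat.not_le_of_lt (Nat.lt_of_succ_le hc)),
             fun hc => absurd h (Nat.not_le_of_lt (Nat.lt_of_succ_le hc))⟩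
  simp only [finForm, TForm.always, sat]
  constructor
  · intro h
    rcases h n (Nat.zero_le n) (le_refl _) with h' | ⟨i, _, _, h'⟩
    · exact h'.1 ((hF H n).2 (le_refl n))
    · exact h'.elim
  · intro h j _ hjn
    refine Or.inl ?_
    have hjn' : j ≤ n := Nat.cast_le.mp hjn
    constructor
    · intro hFj
      have : j = n := le_antisymm hjn' ((hF H j).1 hFj)
      exact this ▸ h
    · intro hFj
      have : j = n := le_antisymm hjn' ((hF T j).1 hFj)
      subst this
      exact ⟨h.2, h.2⟩

lemma progSat_iff {α : Type} {n : ℕ} {H T : ℕ → Set α} {Y X : Set (α × ℕ)}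
    (P : TProgram α)
    (hH : ∀ (a : α) (i : ℕ), i ≤ n → (a ∈ H i ↔ (a, i) ∈ Y))
    (hT : ∀ (a : α) (i : ℕ), i ≤ n → (a ∈ T i ↔ (a, i) ∈ X))
    (hsub : ∀ i, i ≤ n → H i ⊆ T i) :
    ProgSat (n : ℕ∞) H T P ↔ ∀ r ∈ tau n P, rruleSatHT Y X r := by
  have hTsub : ∀ i, i ≤ n → T i ⊆ T i := fun _ _ => le_refl _
  have hRrule : ∀ (p : List (RLit α) × List (RLit α)) (k : ℕ), k ≤ n →
      (sat (n : ℕ∞) (.imp (conj RLit.form p.1) (disj RLit.form p.2)) H T k ↔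
        rruleSatHT Y X ⟨p.1.map (trR k), p.2.map (trR k)⟩) := by
    intro p k hk
    exact sat_rule RLit.form (trR k) p.1 p.2 k
      (fun l _ => sat_rlit hH hT hsub hk l)
      (fun l _ => (sat_rlit hT hT hTsub hk l).trans (rlitHT_self X _))
  have hTrule : ∀ (p : List (TLit α) × List (TLit α)) (k : ℕ), 1 ≤ k → k ≤ n →
      (sat (n : ℕ∞) (.imp (conj TLit.form p.1) (disj TLit.form p.2)) H T k ↔
        rruleSatHT Y X ⟨p.1.map (trT k), p.2.map (trT k)⟩) := by
    intro p k hk1 hk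
    exact sat_rule TLit.form (trT k) p.1 p.2 k
      (fun l _ => sat_tlit hH hT hsub hk1 hk l)
      (fun l _ => (sat_tlit hT hT hTsub hk1 hk l).trans (rlitHT_self X _))
  constructor
  · rintro ⟨h1, h2, h3⟩ r hr
    rcases hr with (⟨p, hp, rfl⟩ | ⟨p, hp, k, hk1, hkn, rfl⟩) | ⟨p, hp, rfl⟩
    · exact (hRrule p 0 (Nat.zero_le n)).1 (h1 p hp)
    · exact (hTrule p k hk1 hkn).1 (((sat_dynForm p).1 (h2 p hp)) k hk1 hkn)
    · exact (hRrule p n (le_refl n)).1 ((sat_finForm p).1 (h3 p hp))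
  · intro h
    refine ⟨?_, ?_, ?_⟩
    · intro p hp
      exact (hRrule p 0 (Nat.zero_le n)).2
        (h _ (Or.inl (Or.inl ⟨p, hp, rfl⟩)))
    · intro p hp
      refine (sat_dynForm p).2 (fun k hk1 hkn => ?_)
      exact (hTrule p k hk1 hkn).2
        (h _ (Or.inl (Or.inr ⟨p, hp, k, hk1, hkn, rfl⟩)))
    · intro p hp
      exact (sat_finForm p).2
        ((hRrule p n (le_refl n)).2 (h _ (Or.inr ⟨p, hp, rfl⟩)))

end AuxProof

/-- Bounded translation correctness: T is a temporal stable model of P of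
    length λ iff the corresponding set X of time-stamped atoms is a stable model of τ_λ(P). -/
theorem bounded_translation {α : Type} (P : TProgram α) (n : ℕ)
    (T : ℕ → Set α) (X : Set (α × ℕ))
    (hXdom : ∀ p : α × ℕ, p ∈ X → p.2 ≤ n)
    (hcorr : ∀ (a : α) (i : ℕ), i ≤ n → (a ∈ T i ↔ (a, i) ∈ X)) :
    TStable P n T ↔ Stable (tau n P) X := by
  have hTX : ∀ (a : α) (i : ℕ), i ≤ n → (a ∈ T i ↔ (a, i) ∈ X) := hcorr
  have hTsub : ∀ i, i ≤ n → T i ⊆ T i := fun _ _ => le_refl _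
  constructor
  · rintro ⟨hsat, hmin⟩
    refine ⟨(progSat_iff P hTX hTX hTsub).1 hsat, ?_⟩
    rintro ⟨Y, hYX, hYsat⟩
    apply hmin
    set H : ℕ → Set α := fun i => if i ≤ n then {a | (a, i) ∈ Y} else T i with hHdef
    have hH : ∀ (a : α) (i : ℕ), i ≤ n → (a ∈ H i ↔ (a, i) ∈ Y) := by
      intro a i hi; simp [hHdef, hi]
    have hsub : ∀ i, i ≤ n → H i ⊆ T i := by
      intro i hi a ha
      exact (hcorr a i hi).2 (hYX.1 ((hH a i hi).1 ha))
    obtain ⟨⟨a, i⟩, hpX, hpY⟩ := Set.exists_of_ssubset hYX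
    have hin : i ≤ n := hXdom _ hpX
    refine ⟨H, ⟨hsub, ⟨i, hin, ?_⟩⟩, (progSat_iff P hH hTX hsub).2 hYsat⟩
    intro hEq
    exact hpY ((hH a i hin).1 (hEq ▸ (hcorr a i hin).2 hpX))
  · rintro ⟨hsat, hmin⟩
    refine ⟨(progSat_iff P hTX hTX hTsub).2 hsat, ?_⟩
    rintro ⟨H, ⟨hsub, i, hin, hne⟩, hHsat⟩
    apply hmin
    set Y : Set (α × ℕ) := {p | p.1 ∈ H p.2 ∧ p.2 ≤ n} with hYdef
    have hH : ∀ (a : α) (j : ℕ), j ≤ n → (a ∈ H j ↔ (a, j) ∈ Y) := by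
      intro a j hj; simp [hYdef, hj]
    have hYsub : Y ⊆ X := by
      rintro ⟨a, j⟩ ⟨ha, hj⟩
      exact (hcorr a j hj).1 (hsub j hj ha)
    have hHiT : H i ⊆ T i := hsub i hin
    obtain ⟨a, haT, haH⟩ : ∃ a, a ∈ T i ∧ a ∉ H i := by
      by_contra hc
      push_neg at hc
      exact hne (le_antisymm hHiT hc)
    refine ⟨Y, ⟨hYsub, ?_⟩, (progSat_iff P hH hTX hsub).1 hHsat⟩
    intro hEq
    exact haH ((hH a i hin).2 (hEq ((hcorr a i hin).1 haT)))
end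

section
/- Over finite traces, □◇a is THT_f-equivalent to □(F → a): for any finite HT-trace ⟨H,T⟩ of length n and any k ≤ n, ⟨H,T⟩,k ⊨ □◇a iff ⟨H,T⟩,k ⊨ □(F → a), i.e., iff a ∈ H_n. -/
open scoped Classical

variable {α : Type}

/-- over finite traces, □◇a ≡ □(F → a):
    at any k ≤ n both are satisfied iff a ∈ H_n. -/
theorem always_ev_finite {α : Type} (a : α) (n : ℕ) (H T : ℕ → Set α) (hHT : isHT H T)
    (k : ℕ) (hk : k ≤ n) :
    (sat (n : ℕ∞) (TForm.always (TForm.ev (.atom a))) H T k ↔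
      sat (n : ℕ∞) (TForm.always (.imp TForm.F (.atom a))) H T k) ∧
    (sat (n : ℕ∞) (TForm.always (TForm.ev (.atom a))) H T k ↔ a ∈ H n) := by
  have hcast : ∀ j : ℕ, ((j : ℕ∞) + 1 ≤ (n : ℕ∞)) ↔ j + 1 ≤ n := by
    intro j
    rw [show ((j : ℕ∞) + 1) = ((j + 1 : ℕ) : ℕ∞) by push_cast; ring, Nat.cast_le]
  have h2 : sat (n : ℕ∞) (TForm.always (.imp TForm.F (.atom a))) H T k ↔ a ∈ H n := by
    constructor
    · intro h
      have := h n hk (le_refl _)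
      rcases this with h' | ⟨i, _, _, hf⟩
      · exact h'.1 ⟨fun hx => by simpa [hcast] using hx.1, fun hx => by simpa [hcast] using hx.1⟩
      · exact hf.elim
    · intro ha j hj hjn
      left
      have hjn' : j ≤ n := by exact_mod_cast hjn
      constructor
      · intro hF
        have : j = n := by
          by_contra hne
          exact hF.1 ⟨(hcast j).2 (Nat.succ_le_of_lt (lt_of_le_of_ne hjn' hne)), trivial⟩
        exact this ▸ ha
      · intro hF
        have : j = n := by
          by_contra hne
          exact hF.1 ⟨(hcast j).2 (Nat.succ_le_of_lt (lt_of_le_of_ne hjn' hne)), trivial⟩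
        exact this ▸ hHT n ha
  have h1 : sat (n : ℕ∞) (TForm.always (TForm.ev (.atom a))) H T k ↔ a ∈ H n := by
    constructor
    · intro h
      rcases h n hk (le_refl _) with ⟨m, hm1, hm2, hm3, _⟩ | ⟨i, _, _, hf⟩
      · have hm2' : m ≤ n := by exact_mod_cast hm2
        have : m = n := le_antisymm hm2' hm1
        exact this ▸ hm3
      · exact hf.elim
    · intro ha j hj hjn
      have hjn' : j ≤ n := by exact_mod_cast hjn
      exact Or.inl ⟨n, hjn', le_refl _, ha, fun i _ _ => trivial⟩
  exact ⟨h1.trans h2.symm, h1⟩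
end
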